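/- Let (μ,ν,λ) ∈ Par_n^3 satisfy every extended Horn inequality. Then for all disjoint subsets X, Y ⊆ [n], the subset-sum inequality 0 ≤ Σ_{i∈X} μ_i + Σ_{i∈Y} ν_i − Σ_{i∈Y} μ_i − Σ_{i∈X} ν_i + Σ_{i=1}^{|X|+|Y|} λ_i holds, and the same holds for every permutation of the roles of μ, ν, λ. -/

import Mathlib

/-- `μ` is a partition with at most `n` parts: a weakly decreasing sequence
`μ 0 ≥ μ 1 ≥ ⋯` of naturals (the paper's part `μ_{i+1}` is `μ i`, i.e. we use
0-indexing) vanishing from index `n` on. -/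
def IsPartitionN (n : ℕ) (μ : ℕ → ℕ) : Prop :=
  Antitone μ ∧ ∀ i, n ≤ i → μ i = 0

/-- The cells `(row, column)` (both 0-indexed) of the skew shape `lam/mu`. -/
def skewCells (lam mu : ℕ → ℕ) : Set (ℕ × ℕ) :=
  {p | mu p.1 ≤ p.2 ∧ p.2 < lam p.1}

/-- `T` is a Littlewood–Richardson skew tableau of shape `lam/mu` and content
`nu`: the shape `mu` is contained in `lam`, rows weakly increase, columns
strictly increase, the (0-indexed) letter `t` occurs `nu t` times, and every
prefix of the reverse reading word (rows read right-to-left, top-to-bottom)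
contains at least as many letters `t` as letters `t+1`. -/
def IsLRTableau (lam mu nu : ℕ → ℕ) (T : ℕ × ℕ → ℕ) : Prop :=
  (∀ i, mu i ≤ lam i) ∧
  (∀ i j j', mu i ≤ j → j ≤ j' → j' < lam i → T (i, j) ≤ T (i, j')) ∧
  (∀ i j, (i, j) ∈ skewCells lam mu → (i + 1, j) ∈ skewCells lam mu →
    T (i, j) < T (i + 1, j)) ∧
  (∀ t, Set.ncard {p ∈ skewCells lam mu | T p = t} = nu t) ∧
  (∀ i j t,
    Set.ncard {p ∈ skewCells lam mu |
        T p = t + 1 ∧ (p.1 < i ∨ (p.1 = i ∧ j ≤ p.2))} ≤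
      Set.ncard {p ∈ skewCells lam mu |
        T p = t ∧ (p.1 < i ∨ (p.1 = i ∧ j ≤ p.2))})

/-- The Littlewood–Richardson coefficient `c^{lam}_{mu,nu}`: the number of
Littlewood–Richardson skew tableaux of shape `lam/mu` and content `nu`
(tableaux are normalized to vanish off the shape). -/
noncomputable def lrCoeff (lam mu nu : ℕ → ℕ) : ℕ :=
  Set.ncard {T : ℕ × ℕ → ℕ | IsLRTableau lam mu nu T ∧
    ∀ p ∉ skewCells lam mu, T p = 0}

/-- The Newell–Littlewood number
`N_{μ,ν,λ} = ∑_{α,β,γ} c^μ_{α,β} c^ν_{α,γ} c^λ_{β,γ}`, realized as the number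
of tuples `((α, β, γ), (T₁, T₂, T₃))` where `α, β, γ` are partitions and
`T₁, T₂, T₃` are Littlewood–Richardson tableaux witnessing the coefficients
`c^μ_{α,β}`, `c^ν_{α,γ}` and `c^λ_{β,γ}` respectively. -/
noncomputable def nlNumber (mu nu lam : ℕ → ℕ) : ℕ :=
  Set.ncard {x : ((ℕ → ℕ) × (ℕ → ℕ) × (ℕ → ℕ)) ×
      ((ℕ × ℕ → ℕ) × (ℕ × ℕ → ℕ) × (ℕ × ℕ → ℕ)) |
    Antitone x.1.1 ∧ Antitone x.1.2.1 ∧ Antitone x.1.2.2 ∧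
    (IsLRTableau mu x.1.1 x.1.2.1 x.2.1 ∧
      ∀ p ∉ skewCells mu x.1.1, x.2.1 p = 0) ∧
    (IsLRTableau nu x.1.1 x.1.2.2 x.2.2.1 ∧
      ∀ p ∉ skewCells nu x.1.1, x.2.2.1 p = 0) ∧
    (IsLRTableau lam x.1.2.1 x.1.2.2 x.2.2.2 ∧
      ∀ p ∉ skewCells lam x.1.2.1, x.2.2.2 p = 0)}

/-- For `I = {i₁ < ⋯ < i_d} ⊆ {0, 1, 2, …}` (the 0-indexed version of the
paper's subsets of positive integers), `tauPartition I` is `τ(I)`, i.e. the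
partition whose (0-indexed) part `t` is `i_{d-t} − (d−t−1) - 1`; for the
paper's 1-indexed sets this is `τ(I) = (i_d − d ≥ ⋯ ≥ i₂ − 2 ≥ i₁ − 1)`. -/
def tauPartition (I : Finset ℕ) : ℕ → ℕ := fun t =>
  if t < I.card then
    (I.sort (· ≤ ·)).getD (I.card - 1 - t) 0 - (I.card - 1 - t)
  else 0

/-- Conditions (I)–(III) defining the set `𝒢_n` of data for the extended Horn
inequalities: all six sets are subsets of `{0, …, n−1}` (the 0-indexed version
of `[n] = {1, …, n}`), `A ∩ A' = B ∩ B' = C ∩ C' = ∅`,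
`|A| = |B'| + |C'|`, `|B| = |A'| + |C'|`, `|C| = |A'| + |B'|`, and there exist
`A₁, A₂, B₁, B₂, C₁, C₂ ⊆ {0, …, n−1}` with `|A₁| = |A₂| = |A'|`,
`|B₁| = |B₂| = |B'|`, `|C₁| = |C₂| = |C'|` such that
`c^{τ(A')}_{τ(A₁),τ(A₂)}, c^{τ(B')}_{τ(B₁),τ(B₂)}, c^{τ(C')}_{τ(C₁),τ(C₂)} > 0`
and `c^{τ(A)}_{τ(B₁),τ(C₂)}, c^{τ(B)}_{τ(C₁),τ(A₂)}, c^{τ(C)}_{τ(A₁),τ(B₂)} > 0`. -/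
def IsExtHornTuple (n : ℕ) (A A' B B' C C' : Finset ℕ) : Prop :=
  A ⊆ Finset.range n ∧ A' ⊆ Finset.range n ∧ B ⊆ Finset.range n ∧
    B' ⊆ Finset.range n ∧ C ⊆ Finset.range n ∧ C' ⊆ Finset.range n ∧
  Disjoint A A' ∧ Disjoint B B' ∧ Disjoint C C' ∧
  A.card = B'.card + C'.card ∧ B.card = A'.card + C'.card ∧
    C.card = A'.card + B'.card ∧
  ∃ A₁ A₂ B₁ B₂ C₁ C₂ : Finset ℕ,
    A₁ ⊆ Finset.range n ∧ A₂ ⊆ Finset.range n ∧ B₁ ⊆ Finset.range n ∧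
      B₂ ⊆ Finset.range n ∧ C₁ ⊆ Finset.range n ∧ C₂ ⊆ Finset.range n ∧
    A₁.card = A'.card ∧ A₂.card = A'.card ∧ B₁.card = B'.card ∧
      B₂.card = B'.card ∧ C₁.card = C'.card ∧ C₂.card = C'.card ∧
    0 < lrCoeff (tauPartition A') (tauPartition A₁) (tauPartition A₂) ∧
    0 < lrCoeff (tauPartition B') (tauPartition B₁) (tauPartition B₂) ∧
    0 < lrCoeff (tauPartition C') (tauPartition C₁) (tauPartition C₂) ∧
    0 < lrCoeff (tauPartition A) (tauPartition B₁) (tauPartition C₂) ∧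
    0 < lrCoeff (tauPartition B) (tauPartition C₁) (tauPartition A₂) ∧
    0 < lrCoeff (tauPartition C) (tauPartition A₁) (tauPartition B₂)

/-- `(μ, ν, lam)` satisfies every extended Horn inequality (with ambient set
`{0, …, n−1}`). -/
def SatisfiesExtHorn (n : ℕ) (μ ν lam : ℕ → ℕ) : Prop :=
  ∀ A A' B B' C C' : Finset ℕ, IsExtHornTuple n A A' B B' C C' →
    (0 : ℤ) ≤ (∑ i ∈ A, (μ i : ℤ)) - (∑ i ∈ A', (μ i : ℤ)) +
      (∑ j ∈ B, (ν j : ℤ)) - (∑ j ∈ B', (ν j : ℤ)) +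
      (∑ k ∈ C, (lam k : ℤ)) - (∑ k ∈ C', (lam k : ℤ))
-- auxiliary lemmas, part 1
lemma tau_empty : tauPartition ∅ = fun _ => 0 := by
  funext t; simp [tauPartition]

lemma tau_range (k : ℕ) : tauPartition (Finset.range k) = fun _ => 0 := by
  funext t
  simp only [tauPartition, Finset.card_range]
  split
  · next h =>
    rw [Finset.sort_range, List.getD_eq_getElem _ _ (by simp; omega)]
    simp
  · rfl

lemma tau_anti (S : Finset ℕ) : Antitone (tauPartition S) := by
  apply antitone_nat_of_succ_le
  intro t
  unfold tauPartition
  by_cases h1 : t + 1 < S.card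
  · have h0 : t < S.card := by omega
    simp only [if_pos h1, if_pos h0]
    have hlen : (S.sort (· ≤ ·)).length = S.card := Finset.length_sort _
    have hm1 : S.card - 1 - (t+1) < (S.sort (· ≤ ·)).length := by omega
    have hm0 : S.card - 1 - t < (S.sort (· ≤ ·)).length := by omega
    rw [List.getD_eq_getElem _ _ hm1, List.getD_eq_getElem _ _ hm0]
    have hlt : (S.sort (· ≤ ·))[S.card - 1 - (t+1)] < (S.sort (· ≤ ·))[S.card - 1 - t] := by
      have := S.sortedLT_sort.pairwise
      exact List.pairwise_iff_getElem.mp this _ _ hm1 hm0 (by omega)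
    omega
  · simp only [if_neg h1]
    exact Nat.zero_le _

lemma tau_zero_of_le (S : Finset ℕ) {t : ℕ} (h : S.card ≤ t) : tauPartition S t = 0 := by
  simp [tauPartition, Nat.not_lt.mpr h]

lemma lr_self_zero (f : ℕ → ℕ) : 0 < lrCoeff f f (fun _ => 0) := by
  have hcells : skewCells f f = ∅ := by
    ext p; simp only [skewCells, Set.mem_setOf_eq, Set.mem_empty_iff_false, iff_false]
    omega
  have hset : {T : ℕ × ℕ → ℕ | IsLRTableau f f (fun _ => 0) T ∧
      ∀ p ∉ skewCells f f, T p = 0} = {fun _ => 0} := by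
    ext T
    simp only [Set.mem_setOf_eq, Set.mem_singleton_iff]
    constructor
    · rintro ⟨_, hoff⟩
      funext p
      exact hoff p (by rw [hcells]; exact Set.notMem_empty p)
    · rintro rfl
      refine ⟨⟨fun i => le_refl _, fun _ _ _ _ _ _ => le_refl _, ?_, ?_, ?_⟩, fun _ _ => rfl⟩
      · intro i j hm _
        rw [hcells] at hm
        exact absurd hm (Set.notMem_empty _)
      · intro t
        rw [hcells]
        simp
      · intro i j t
        rw [hcells]
        simp
  rw [lrCoeff, hset, Set.ncard_singleton]
  norm_num
lemma lr_zero_self' (π : ℕ → ℕ) (c : ℕ) (hA : Antitone π) (h0 : ∀ t, c ≤ t → π t = 0) :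
    0 < lrCoeff π (fun _ => 0) π := by
  classical
  set z : ℕ → ℕ := fun _ => 0 with hz
  have hmem : ∀ p : ℕ × ℕ, p ∈ skewCells π z ↔ p.2 < π p.1 := by
    intro p; simp [skewCells, hz]
  have hπpos : ∀ t, 0 < π t → t < c := by
    intro t ht
    by_contra h
    rw [h0 t (by omega)] at ht
    omega
  set F : Finset (ℕ × ℕ) := Finset.range c ×ˢ Finset.range (π 0) with hF
  have hcellsF : ∀ p ∈ skewCells π z, p ∈ F := by
    rintro ⟨a, b⟩ hp
    rw [hmem] at hp
    have hp' : b < π a := hp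
    simp only [hF, Finset.mem_product, Finset.mem_range]
    exact ⟨hπpos a (by omega), lt_of_lt_of_le hp' (hA (Nat.zero_le a))⟩
  have hfin : (skewCells π z).Finite :=
    Set.Finite.subset F.finite_toSet (fun p hp => hcellsF p hp)
  set T₀ : ℕ × ℕ → ℕ := fun p => if p.2 < π p.1 then p.1 else 0 with hT₀
  -- content sets
  have htc : ∀ t, {p ∈ skewCells π z | T₀ p = t} = ↑({t} ×ˢ Finset.range (π t)) := by
    intro t
    ext ⟨a, b⟩
    simp only [Set.mem_setOf_eq, hmem, hT₀, Finset.mem_coe, Finset.mem_product,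
      Finset.mem_singleton, Finset.mem_range]
    constructor
    · rintro ⟨h1, h2⟩
      rw [if_pos h1] at h2
      subst h2
      exact ⟨rfl, h1⟩
    · rintro ⟨rfl, h1⟩
      exact ⟨h1, if_pos h1⟩
  have hT₀mem : IsLRTableau π z π T₀ ∧ ∀ p ∉ skewCells π z, T₀ p = 0 := by
    refine ⟨⟨fun i => Nat.zero_le _, ?_, ?_, ?_, ?_⟩, ?_⟩
    · intro i j j' _ hjj' hj'
      simp only [hT₀]
      rw [if_pos (by omega), if_pos hj']
    · intro i j hm hm'
      rw [hmem] at hm hm'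
      simp only [hT₀] at *
      rw [if_pos hm, if_pos hm']
      omega
    · intro t
      rw [htc t, Set.ncard_coe_finset]
      simp
    · intro i j t
      set Jf : ℕ → Finset ℕ := fun t' =>
        if t' < i then Finset.range (π t')
        else if t' = i then (Finset.range (π t')).filter (fun b => j ≤ b)
        else ∅ with hJf
      have hset : ∀ t', {p ∈ skewCells π z | T₀ p = t' ∧ (p.1 < i ∨ (p.1 = i ∧ j ≤ p.2))} =
          ↑({t'} ×ˢ Jf t') := by
        intro t'
        ext ⟨a, b⟩
        simp only [Set.mem_setOf_eq, hmem, hT₀, Finset.mem_coe, Finset.mem_product,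
          Finset.mem_singleton]
        constructor
        · rintro ⟨h1, h2, h3⟩
          rw [if_pos h1] at h2
          subst h2
          refine ⟨rfl, ?_⟩
          simp only [hJf]
          split
          · simpa using h1
          · next hne =>
            split
            · next heq => simp only [Finset.mem_filter, Finset.mem_range]; omega
            · next hne2 => omega
        · rintro ⟨rfl, hb⟩
          simp only [hJf] at hb
          split at hb
          · next hlt =>
            simp only [Finset.mem_range] at hb
            exact ⟨hb, if_pos hb, Or.inl hlt⟩
          · split at hb
            · next heq =>
              simp only [Finset.mem_filter, Finset.mem_range] at hb
              exact ⟨hb.1, if_pos hb.1, Or.inr ⟨heq, hb.2⟩⟩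
            · simp at hb
      rw [hset (t+1), hset t, Set.ncard_coe_finset, Set.ncard_coe_finset,
        Finset.card_product, Finset.card_product, Finset.card_singleton,
        Finset.card_singleton, one_mul, one_mul]
      have hmono : π (t+1) ≤ π t := hA (Nat.le_succ t)
      simp only [hJf]
      rcases lt_trichotomy (t+1) i with h | h | h
      · rw [if_pos h, if_pos (by omega)]
        simpa using hmono
      · rw [if_neg (by omega), if_pos h, if_pos (by omega)]
        calc (Finset.filter (fun b => j ≤ b) (Finset.range (π (t+1)))).card
            ≤ (Finset.range (π (t+1))).card := Finset.card_filter_le _ _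
          _ ≤ (Finset.range (π t)).card := by simpa using hmono
      · rw [if_neg (by omega), if_neg (by omega)]
        simp
    · rintro ⟨a, b⟩ hp
      rw [hmem] at hp
      simp only [hT₀, if_neg hp]
  -- finiteness of the tableau set
  set N := c + 1 with hN
  have hTbound : ∀ T, (IsLRTableau π z π T ∧ ∀ p ∉ skewCells π z, T p = 0) →
      ∀ p, T p < N := by
    rintro T ⟨⟨_, _, _, hcont, _⟩, hoff⟩ p
    by_cases hp : p ∈ skewCells π z
    · have hfin' : {q ∈ skewCells π z | T q = T p}.Finite :=
        hfin.subset (fun q hq => hq.1)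
      have hpos : 0 < π (T p) := by
        rw [← hcont (T p)]
        exact (Set.ncard_pos hfin').mpr ⟨p, hp, rfl⟩
      have := hπpos _ hpos
      omega
    · rw [hoff p hp]; omega
  set g : (↥F → Fin N) → (ℕ × ℕ → ℕ) := fun f p => if h : p ∈ F then (f ⟨p, h⟩ : ℕ) else 0
    with hg
  have hsub : {T : ℕ × ℕ → ℕ | IsLRTableau π z π T ∧ ∀ p ∉ skewCells π z, T p = 0} ⊆
      Set.range g := by
    intro T hT
    refine ⟨fun q => ⟨T q, hTbound T hT q⟩, ?_⟩
    funext p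
    simp only [hg]
    split
    · rfl
    · next h =>
      exact (hT.2 p (fun hc => h (hcellsF p hc))).symm
  have hfinset : {T : ℕ × ℕ → ℕ | IsLRTableau π z π T ∧
      ∀ p ∉ skewCells π z, T p = 0}.Finite :=
    (Set.finite_range g).subset hsub
  rw [lrCoeff]
  exact (Set.ncard_pos hfinset).mpr ⟨T₀, hT₀mem⟩

lemma lr_zero_self (S : Finset ℕ) :
    0 < lrCoeff (tauPartition S) (fun _ => 0) (tauPartition S) :=
  lr_zero_self' _ S.card (tau_anti S) (fun _ h => tau_zero_of_le S h)
section Tuples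

variable {n : ℕ} {X Y : Finset ℕ}

lemma card_sum_le (hX : X ⊆ Finset.range n) (hY : Y ⊆ Finset.range n)
    (hXY : Disjoint X Y) : X.card + Y.card ≤ n := by
  rw [← Finset.card_union_of_disjoint hXY]
  calc (X ∪ Y).card ≤ (Finset.range n).card :=
        Finset.card_le_card (Finset.union_subset hX hY)
    _ = n := Finset.card_range n

lemma tupleT1 (hX : X ⊆ Finset.range n) (hY : Y ⊆ Finset.range n)
    (hXY : Disjoint X Y) :
    IsExtHornTuple n X Y Y X (Finset.range (X.card + Y.card)) ∅ := by
  have hd : X.card + Y.card ≤ n := card_sum_le hX hY hXY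
  have hXn : X.card ≤ n := by omega
  have hYn : Y.card ≤ n := by omega
  refine ⟨hX, hY, hY, hX, Finset.range_subset_range.mpr hd, Finset.empty_subset _,
    hXY, hXY.symm, Finset.disjoint_empty_right _, by simp, by simp,
    by rw [Finset.card_range]; omega,
    Finset.range Y.card, Y, X, Finset.range X.card, ∅, ∅,
    Finset.range_subset_range.mpr hYn, hY, hX, Finset.range_subset_range.mpr hXn,
    Finset.empty_subset _, Finset.empty_subset _,
    by simp, rfl, rfl, by simp, by simp, by simp, ?_, ?_, ?_, ?_, ?_, ?_⟩ <;>
    simp only [tau_empty, tau_range]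
  · exact lr_zero_self Y
  · exact lr_self_zero _
  · exact lr_self_zero _
  · exact lr_self_zero _
  · exact lr_zero_self Y
  · exact lr_self_zero _

lemma tupleT2 (hX : X ⊆ Finset.range n) (hY : Y ⊆ Finset.range n)
    (hXY : Disjoint X Y) :
    IsExtHornTuple n X Y (Finset.range (X.card + Y.card)) ∅ Y X := by
  have hd : X.card + Y.card ≤ n := card_sum_le hX hY hXY
  have hXn : X.card ≤ n := by omega
  have hYn : Y.card ≤ n := by omega
  refine ⟨hX, hY, Finset.range_subset_range.mpr hd, Finset.empty_subset _, hY, hX,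
    hXY, Finset.disjoint_empty_right _, hXY.symm, by simp,
    by rw [Finset.card_range]; omega, by simp,
    Y, Finset.range Y.card, ∅, ∅, Finset.range X.card, X,
    hY, Finset.range_subset_range.mpr hYn, Finset.empty_subset _, Finset.empty_subset _,
    Finset.range_subset_range.mpr hXn, hX,
    rfl, by simp, by simp, by simp, by simp, rfl, ?_, ?_, ?_, ?_, ?_, ?_⟩ <;>
    simp only [tau_empty, tau_range]
  · exact lr_self_zero _
  · exact lr_self_zero _
  · exact lr_zero_self X
  · exact lr_zero_self X
  · exact lr_self_zero _
  · exact lr_self_zero _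

lemma tupleT3 (hX : X ⊆ Finset.range n) (hY : Y ⊆ Finset.range n)
    (hXY : Disjoint X Y) :
    IsExtHornTuple n (Finset.range (X.card + Y.card)) ∅ X Y Y X := by
  have hd : X.card + Y.card ≤ n := card_sum_le hX hY hXY
  have hXn : X.card ≤ n := by omega
  have hYn : Y.card ≤ n := by omega
  refine ⟨Finset.range_subset_range.mpr hd, Finset.empty_subset _, hX, hY, hY, hX,
    Finset.disjoint_empty_right _, hXY, hXY.symm,
    by rw [Finset.card_range]; omega, by simp, by simp,
    ∅, ∅, Finset.range Y.card, Y, X, Finset.range X.card,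
    Finset.empty_subset _, Finset.empty_subset _, Finset.range_subset_range.mpr hYn,
    hY, hX, Finset.range_subset_range.mpr hXn,
    by simp, by simp, by simp, rfl, rfl, by simp, ?_, ?_, ?_, ?_, ?_, ?_⟩ <;>
    simp only [tau_empty, tau_range]
  · exact lr_self_zero _
  · exact lr_zero_self Y
  · exact lr_self_zero _
  · exact lr_self_zero _
  · exact lr_self_zero _
  · exact lr_zero_self Y

end Tuples

/-- Proposition 2.5(iii): the extended Horn inequalities imply all
`S₃`-permutations of the subset-sum inequalities.  The permutation `σ`
permutes the roles of `μ, ν, lam`. -/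
theorem subset_sum_of_satisfiesExtHorn (n : ℕ) (μ ν lam : ℕ → ℕ)
    (hμ : IsPartitionN n μ) (hν : IsPartitionN n ν) (hlam : IsPartitionN n lam)
    (hEH : SatisfiesExtHorn n μ ν lam) (σ : Equiv.Perm (Fin 3))
    (X Y : Finset ℕ) (hX : X ⊆ Finset.range n) (hY : Y ⊆ Finset.range n)
    (hXY : Disjoint X Y) :
    (0 : ℤ) ≤ (∑ i ∈ X, ((![μ, ν, lam] (σ 0)) i : ℤ)) +
      (∑ i ∈ Y, ((![μ, ν, lam] (σ 1)) i : ℤ)) -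
      (∑ i ∈ Y, ((![μ, ν, lam] (σ 0)) i : ℤ)) -
      (∑ i ∈ X, ((![μ, ν, lam] (σ 1)) i : ℤ)) +
      ∑ i ∈ Finset.range (X.card + Y.card), ((![μ, ν, lam] (σ 2)) i : ℤ) := by
  have fin3 : ∀ x : Fin 3, x = 0 ∨ x = 1 ∨ x = 2 := by decide
  have hinj := σ.injective
  have e0 : ![μ, ν, lam] (0 : Fin 3) = μ := rfl
  have e1 : ![μ, ν, lam] (1 : Fin 3) = ν := rfl
  have e2 : ![μ, ν, lam] (2 : Fin 3) = lam := rfl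
  rcases fin3 (σ 0) with h0 | h0 | h0 <;> rcases fin3 (σ 1) with h1 | h1 | h1
  · exact absurd (hinj (h0.trans h1.symm)) (by decide)
  · -- σ = (0,1,2)
    have h2 : σ 2 = 2 := by
      rcases fin3 (σ 2) with h2 | h2 | h2 <;>
        first
          | exact h2
          | exact absurd (hinj (h2.trans h0.symm)) (by decide)
          | exact absurd (hinj (h2.trans h1.symm)) (by decide)
    rw [h0, h1, h2, e0, e1, e2]
    have key := hEH X Y Y X (Finset.range (X.card + Y.card)) ∅ (tupleT1 hX hY hXY)
    simp only [Finset.sum_empty] at key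
    linarith
  · -- σ = (0,2,1)
    have h2 : σ 2 = 1 := by
      rcases fin3 (σ 2) with h2 | h2 | h2 <;>
        first
          | exact h2
          | exact absurd (hinj (h2.trans h0.symm)) (by decide)
          | exact absurd (hinj (h2.trans h1.symm)) (by decide)
    rw [h0, h1, h2, e0, e1, e2]
    have key := hEH X Y (Finset.range (X.card + Y.card)) ∅ Y X (tupleT2 hX hY hXY)
    simp only [Finset.sum_empty] at key
    linarith
  · -- σ = (1,0,2)
    have h2 : σ 2 = 2 := by
      rcases fin3 (σ 2) with h2 | h2 | h2 <;>
        first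
          | exact h2
          | exact absurd (hinj (h2.trans h0.symm)) (by decide)
          | exact absurd (hinj (h2.trans h1.symm)) (by decide)
    rw [h0, h1, h2, e0, e1, e2]
    have key := hEH Y X X Y (Finset.range (Y.card + X.card)) ∅ (tupleT1 hY hX hXY.symm)
    simp only [Finset.sum_empty] at key
    rw [Nat.add_comm Y.card X.card] at key
    linarith
  · exact absurd (hinj (h0.trans h1.symm)) (by decide)
  · -- σ = (1,2,0)
    have h2 : σ 2 = 0 := by
      rcases fin3 (σ 2) with h2 | h2 | h2 <;>
        first
          | exact h2
          | exact absurd (hinj (h2.trans h0.symm)) (by decide)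
          | exact absurd (hinj (h2.trans h1.symm)) (by decide)
    rw [h0, h1, h2, e0, e1, e2]
    have key := hEH (Finset.range (X.card + Y.card)) ∅ X Y Y X (tupleT3 hX hY hXY)
    simp only [Finset.sum_empty] at key
    linarith
  · -- σ = (2,0,1)
    have h2 : σ 2 = 1 := by
      rcases fin3 (σ 2) with h2 | h2 | h2 <;>
        first
          | exact h2
          | exact absurd (hinj (h2.trans h0.symm)) (by decide)
          | exact absurd (hinj (h2.trans h1.symm)) (by decide)
    rw [h0, h1, h2, e0, e1, e2]
    have key := hEH Y X (Finset.range (Y.card + X.card)) ∅ X Y (tupleT2 hY hX hXY.symm)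
    simp only [Finset.sum_empty] at key
    rw [Nat.add_comm Y.card X.card] at key
    linarith
  · -- σ = (2,1,0)
    have h2 : σ 2 = 0 := by
      rcases fin3 (σ 2) with h2 | h2 | h2 <;>
        first
          | exact h2
          | exact absurd (hinj (h2.trans h0.symm)) (by decide)
          | exact absurd (hinj (h2.trans h1.symm)) (by decide)
    rw [h0, h1, h2, e0, e1, e2]
    have key := hEH (Finset.range (Y.card + X.card)) ∅ Y X X Y (tupleT3 hY hX hXY.symm)
    simp only [Finset.sum_empty] at key
    rw [Nat.add_comm Y.card X.card] at key
    linarith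
  · exact absurd (hinj (h0.trans h1.symm)) (by decide)
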